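/- Let ω₁, ω₂, η₁, η₂ > 0. Then ∫₀¹ f(x;ω₁,η₁)·F(x;ω₂,η₂) dx = (ω₁/((ω₁+3η₁)(ω₂+3η₂)))·[ω₁ω₂/(ω₁+ω₂) + ω₂η₁·(2/(2ω₁+ω₂) + 8ω₁/(2ω₁+ω₂)²) + ω₁η₂·(3/(ω₁+2ω₂) + 4ω₂/(ω₁+2ω₂)²) + η₁η₂·(6/(2ω₁+2ω₂) + (24ω₁+8ω₂)/(2ω₁+2ω₂)² + 64ω₁ω₂/(2ω₁+2ω₂)³)]. -/

import Mathlib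

open Real

open Set MeasureTheory Filter


lemma ush_log_bound {x ε : ℝ} (hx0 : 0 < x) (hx1 : x ≤ 1) (hε : 0 < ε) :
    |Real.log x| ≤ ε⁻¹ * x ^ (-ε) := by
  have hlog : Real.log x ≤ 0 := Real.log_nonpos hx0.le hx1
  rw [abs_of_nonpos hlog, ← Real.log_inv]
  have hxi : 0 < x⁻¹ := inv_pos.mpr hx0
  have h2 : Real.log x⁻¹ = ε⁻¹ * Real.log (x⁻¹ ^ ε) := by
    rw [Real.log_rpow hxi]; field_simp
  have h3 : Real.log (x⁻¹ ^ ε) ≤ x⁻¹ ^ ε :=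
    (Real.log_le_sub_one_of_pos (Real.rpow_pos_of_pos hxi ε)).trans (by linarith)
  have h4 : x⁻¹ ^ ε = x ^ (-ε) := by
    rw [Real.inv_rpow hx0.le, ← Real.rpow_neg hx0.le]
  calc Real.log x⁻¹ = ε⁻¹ * Real.log (x⁻¹ ^ ε) := h2
    _ ≤ ε⁻¹ * (x⁻¹ ^ ε) := by
        exact mul_le_mul_of_nonneg_left h3 (inv_pos.mpr hε).le
    _ = ε⁻¹ * x ^ (-ε) := by rw [h4]

lemma ush_intInt_pow_log (a : ℝ) (ha : -1 < a) (k : ℕ) :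
    IntervalIntegrable (fun x => x ^ a * Real.log x ^ k) volume 0 1 := by
  have hmeas : AEStronglyMeasurable (fun x : ℝ => x ^ a * Real.log x ^ k)
      (volume.restrict (Set.uIoc (0:ℝ) 1)) := by
    rw [Set.uIoc_of_le (zero_le_one' ℝ)]
    refine (ContinuousOn.aestronglyMeasurable ?_ measurableSet_Ioc)
    intro x hx
    exact ((Real.continuousAt_rpow_const x a (Or.inl hx.1.ne')).mul
      ((Real.continuousAt_log hx.1.ne').pow k)).continuousWithinAt
  rcases Nat.eq_zero_or_pos k with hk | hk
  · subst hk
    simpa using intervalIntegral.intervalIntegrable_rpow' ha (a := (0:ℝ)) (b := 1)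
  have hkR : (0:ℝ) < k := Nat.cast_pos.mpr hk
  set ε : ℝ := (a+1)/(2*k) with hεdef
  have hε : 0 < ε := div_pos (by linarith) (by positivity)
  have hb : (-1:ℝ) < (a-1)/2 := by linarith
  have hmain := (intervalIntegral.intervalIntegrable_rpow' hb (a := (0:ℝ)) (b := 1)).const_mul (ε⁻¹ ^ k)
  refine hmain.mono_fun hmeas ?_
  rw [Filter.EventuallyLE, ae_restrict_iff' measurableSet_uIoc]
  refine Filter.Eventually.of_forall fun x hx => ?_
  rw [Set.uIoc_of_le (zero_le_one' ℝ)] at hx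
  have hx0 : 0 < x := hx.1
  have hbound := ush_log_bound hx0 hx.2 hε
  have hxa : 0 ≤ x ^ a := (Real.rpow_pos_of_pos hx0 a).le
  have h1 : ‖x ^ a * Real.log x ^ k‖ = x ^ a * |Real.log x| ^ k := by
    rw [norm_mul, Real.norm_eq_abs, Real.norm_eq_abs, abs_of_nonneg hxa, abs_pow]
  have h2 : |Real.log x| ^ k ≤ (ε⁻¹ * x ^ (-ε)) ^ k :=
    pow_le_pow_left₀ (abs_nonneg _) hbound k
  have h3 : x ^ a * (ε⁻¹ * x ^ (-ε)) ^ k = ε⁻¹ ^ k * x ^ ((a-1)/2) := by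
    rw [mul_pow, ← Real.rpow_natCast (x ^ (-ε)) k, ← Real.rpow_mul hx0.le]
    rw [mul_comm (x ^ a), mul_assoc, ← Real.rpow_add hx0]
    congr 2
    rw [hεdef]
    field_simp
    ring
  have h4 : ‖x ^ a * Real.log x ^ k‖ ≤ ε⁻¹ ^ k * x ^ ((a-1)/2) := by
    rw [h1, ← h3]
    exact mul_le_mul_of_nonneg_left h2 hxa
  calc ‖x ^ a * Real.log x ^ k‖ ≤ ε⁻¹ ^ k * x ^ ((a-1)/2) := h4
    _ ≤ ‖ε⁻¹ ^ k * x ^ ((a-1)/2)‖ := le_abs_self _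

lemma ush_tendsto_rpow (r : ℝ) (hr : 0 < r) :
    Tendsto (fun x : ℝ => x ^ r) (nhdsWithin 0 (Set.Ioi 0)) (nhds 0) := by
  have h := (Real.continuousAt_rpow_const 0 r (Or.inr hr.le)).tendsto
  rw [Real.zero_rpow hr.ne'] at h
  exact h.mono_left nhdsWithin_le_nhds

lemma ush_tendsto_rpow_log (r : ℝ) (hr : 0 < r) :
    Tendsto (fun x : ℝ => x ^ r * Real.log x) (nhdsWithin 0 (Set.Ioi 0)) (nhds 0) :=
  (tendsto_log_mul_rpow_nhdsGT_zero hr).congr (fun x => mul_comm _ _)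

lemma ush_tendsto_rpow_log_sq (r : ℝ) (hr : 0 < r) :
    Tendsto (fun x : ℝ => x ^ r * Real.log x ^ 2) (nhdsWithin 0 (Set.Ioi 0)) (nhds 0) := by
  have h := (tendsto_log_mul_rpow_nhdsGT_zero (by positivity : 0 < r/2)).pow 2
  rw [show (0:ℝ)^2 = 0 by norm_num] at h
  refine h.congr' ?_
  filter_upwards [self_mem_nhdsWithin] with x hx
  have hx0 : (0:ℝ) < x := hx
  have h2 : (x ^ (r/2)) ^ 2 = x ^ r := by
    rw [← Real.rpow_natCast (x ^ (r/2)) 2, ← Real.rpow_mul hx0.le]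
    norm_num
  rw [mul_pow, h2]; ring

lemma ush_hasDerivAt (a c0 c1 c2 : ℝ) (ha1 : a + 1 ≠ 0) {x : ℝ} (hx0 : 0 < x) :
    HasDerivAt (fun y : ℝ => c0 * (y^(a+1)/(a+1))
      + c1 * (y^(a+1)*Real.log y/(a+1) - y^(a+1)/(a+1)^2)
      + c2 * (y^(a+1)*Real.log y^2/(a+1) - 2*(y^(a+1)*Real.log y)/(a+1)^2
          + 2*(y^(a+1))/(a+1)^3))
      (x ^ a * (c0 + c1*Real.log x + c2*Real.log x^2)) x := by
  have hP : HasDerivAt (fun y : ℝ => y ^ (a+1)) ((a+1) * x ^ a) x := by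
    have h := Real.hasDerivAt_rpow_const (x := x) (p := a+1) (Or.inl hx0.ne')
    simpa [add_sub_cancel_right] using h
  have hL : HasDerivAt Real.log x⁻¹ x := Real.hasDerivAt_log hx0.ne'
  have hPL : HasDerivAt (fun y : ℝ => y^(a+1) * Real.log y)
      ((a+1)*x^a*Real.log x + x^(a+1)*x⁻¹) x := hP.mul hL
  have hL2 : HasDerivAt (fun y : ℝ => Real.log y ^ 2) (2 * Real.log x * x⁻¹) x := by
    simpa using hL.fun_pow 2
  have hPL2 : HasDerivAt (fun y : ℝ => y^(a+1) * Real.log y^2)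
      ((a+1)*x^a*Real.log x^2 + x^(a+1)*(2*Real.log x*x⁻¹)) x := hP.mul hL2
  have hinv : x ^ (a+1) * x⁻¹ = x ^ a := by
    rw [← Real.rpow_neg_one x, ← Real.rpow_add hx0]; norm_num
  have hPL' : HasDerivAt (fun y : ℝ => y^(a+1) * Real.log y)
      ((a+1)*x^a*Real.log x + x^a) x := by
    convert hPL using 1; rw [hinv]
  have hPL2' : HasDerivAt (fun y : ℝ => y^(a+1) * Real.log y^2)
      ((a+1)*x^a*Real.log x^2 + 2*(x^a*Real.log x)) x := by
    convert hPL2 using 1; rw [← hinv]; ring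
  have h := ((HasDerivAt.const_mul c0 (hP.div_const (a+1))).fun_add
      (HasDerivAt.const_mul c1 ((hPL'.div_const (a+1)).fun_sub (hP.div_const ((a+1)^2))))).fun_add
      (HasDerivAt.const_mul c2 (((hPL2'.div_const (a+1)).fun_sub
        ((HasDerivAt.const_mul 2 hPL').div_const ((a+1)^2))).fun_add
        ((HasDerivAt.const_mul 2 hP).div_const ((a+1)^3))))
  refine h.congr_deriv ?_
  field_simp
  ring

lemma ush_intInt_poly (a c0 c1 c2 : ℝ) (ha : -1 < a) :
    IntervalIntegrable (fun x => x ^ a * (c0 + c1 * Real.log x + c2 * Real.log x ^ 2))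
      volume 0 1 := by
  have i0 := (ush_intInt_pow_log a ha 0).const_mul c0
  have i1 := (ush_intInt_pow_log a ha 1).const_mul c1
  have i2 := (ush_intInt_pow_log a ha 2).const_mul c2
  have h := (i0.add i1).add i2
  have heq : (fun x : ℝ => c0 * (x^a * Real.log x^0) + c1 * (x^a * Real.log x^1)
      + c2 * (x^a * Real.log x^2))
      = fun x : ℝ => x ^ a * (c0 + c1 * Real.log x + c2 * Real.log x ^ 2) := by
    funext x; rw [pow_zero, pow_one]; ring
  rwa [heq] at h

lemma ush_integral_poly (a c0 c1 c2 : ℝ) (ha : -1 < a) :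
    ∫ x in (0:ℝ)..1, x ^ a * (c0 + c1 * Real.log x + c2 * Real.log x ^ 2)
      = c0/(a+1) - c1/(a+1)^2 + 2*c2/(a+1)^3 := by
  have ha1 : 0 < a + 1 := by linarith
  set F := fun y : ℝ => c0 * (y^(a+1)/(a+1))
      + c1 * (y^(a+1)*Real.log y/(a+1) - y^(a+1)/(a+1)^2)
      + c2 * (y^(a+1)*Real.log y^2/(a+1) - 2*(y^(a+1)*Real.log y)/(a+1)^2
          + 2*(y^(a+1))/(a+1)^3) with hFdef
  have hcont : ContinuousOn F (Set.Icc 0 1) := by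
    intro x hx
    rcases eq_or_lt_of_le hx.1 with h0 | h0
    · have hx0 : x = 0 := h0.symm
      subst hx0
      refine ContinuousWithinAt.mono ?_ (Set.Icc_subset_Ici_self)
      rw [← continuousWithinAt_Ioi_iff_Ici]
      have hF0 : F 0 = 0 := by
        simp [hFdef, Real.zero_rpow ha1.ne', Real.log_zero]
      unfold ContinuousWithinAt
      rw [hF0]
      have t1 := ush_tendsto_rpow (a+1) ha1
      have t2 := ush_tendsto_rpow_log (a+1) ha1
      have t3 := ush_tendsto_rpow_log_sq (a+1) ha1
      have h := (((t1.div_const (a+1)).const_mul c0).add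
          (((t2.div_const (a+1)).sub (t1.div_const ((a+1)^2))).const_mul c1)).add
          ((((t3.div_const (a+1)).sub ((t2.const_mul 2).div_const ((a+1)^2))).add
            ((t1.const_mul 2).div_const ((a+1)^3))).const_mul c2)
      simpa using h
    · exact (ush_hasDerivAt a c0 c1 c2 ha1.ne' h0).continuousAt.continuousWithinAt
  have hderiv : ∀ x ∈ Set.Ioo (0:ℝ) 1,
      HasDerivWithinAt F (x ^ a * (c0 + c1*Real.log x + c2*Real.log x^2)) (Set.Ioi x) x :=
    fun x hx => (ush_hasDerivAt a c0 c1 c2 ha1.ne' hx.1).hasDerivWithinAt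
  have hint := ush_intInt_poly a c0 c1 c2 ha
  have h := intervalIntegral.integral_eq_sub_of_hasDeriv_right_of_le zero_le_one hcont hderiv hint
  rw [h]
  have hF1 : F 1 = c0/(a+1) - c1/(a+1)^2 + 2*c2/(a+1)^3 := by
    simp [hFdef, Real.one_rpow, Real.log_one]
    ring
  have hF0 : F 0 = 0 := by
    simp [hFdef, Real.zero_rpow ha1.ne', Real.log_zero]
  rw [hF1, hF0, sub_zero]

theorem ush_stress_strength_general (ω₁ ω₂ η₁ η₂ : ℝ)
    (hω₁ : 0 < ω₁) (hω₂ : 0 < ω₂) (hη₁ : 0 < η₁) (hη₂ : 0 < η₂) :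
    ∫ x in (0:ℝ)..1,
      (ω₁ / (ω₁ + 3*η₁) * (ω₁ * x ^ (ω₁-1) + (2*η₁ - 8*ω₁*η₁*Real.log x) * x ^ (2*ω₁-1))) *
      (1 / (ω₂ + 3*η₂) * (ω₂ * x ^ ω₂ + (3*η₂ - 4*ω₂*η₂*Real.log x) * x ^ (2*ω₂)))
    = ω₁ / ((ω₁ + 3*η₁) * (ω₂ + 3*η₂)) *
      (ω₁*ω₂ / (ω₁ + ω₂)
        + ω₂*η₁ * (2 / (2*ω₁ + ω₂) + 8*ω₁ / (2*ω₁ + ω₂) ^ 2)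
        + ω₁*η₂ * (3 / (ω₁ + 2*ω₂) + 4*ω₂ / (ω₁ + 2*ω₂) ^ 2)
        + η₁*η₂ * (6 / (2*ω₁ + 2*ω₂) + (24*ω₁ + 8*ω₂) / (2*ω₁ + 2*ω₂) ^ 2
            + 64*ω₁*ω₂ / (2*ω₁ + 2*ω₂) ^ 3)) := by
  have h1 : (-1:ℝ) < ω₁+ω₂-1 := by linarith
  have h2 : (-1:ℝ) < 2*ω₁+ω₂-1 := by linarith
  have h3 : (-1:ℝ) < ω₁+2*ω₂-1 := by linarith
  have h4 : (-1:ℝ) < 2*ω₁+2*ω₂-1 := by linarith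
  have i1 := ush_intInt_poly (ω₁+ω₂-1) (ω₁*ω₂) 0 0 h1
  have i2 := ush_intInt_poly (2*ω₁+ω₂-1) (2*η₁*ω₂) (-(8*ω₁*η₁*ω₂)) 0 h2
  have i3 := ush_intInt_poly (ω₁+2*ω₂-1) (3*ω₁*η₂) (-(4*ω₁*ω₂*η₂)) 0 h3
  have i4 := ush_intInt_poly (2*ω₁+2*ω₂-1) (6*η₁*η₂) (-(24*ω₁*η₁*η₂+8*ω₂*η₁*η₂))
      (32*ω₁*ω₂*η₁*η₂) h4
  have hcong : (∫ x in (0:ℝ)..1,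
      (ω₁ / (ω₁ + 3*η₁) * (ω₁ * x ^ (ω₁-1) + (2*η₁ - 8*ω₁*η₁*Real.log x) * x ^ (2*ω₁-1))) *
      (1 / (ω₂ + 3*η₂) * (ω₂ * x ^ ω₂ + (3*η₂ - 4*ω₂*η₂*Real.log x) * x ^ (2*ω₂))))
      = ∫ x in (0:ℝ)..1, (ω₁ / (ω₁ + 3*η₁) * (1 / (ω₂ + 3*η₂))) *
        ((x ^ (ω₁+ω₂-1) * (ω₁*ω₂ + 0 * Real.log x + 0 * Real.log x ^ 2))
        + ((x ^ (2*ω₁+ω₂-1) * (2*η₁*ω₂ + -(8*ω₁*η₁*ω₂) * Real.log x + 0 * Real.log x ^ 2))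
        + ((x ^ (ω₁+2*ω₂-1) * (3*ω₁*η₂ + -(4*ω₁*ω₂*η₂) * Real.log x + 0 * Real.log x ^ 2))
        + (x ^ (2*ω₁+2*ω₂-1) * (6*η₁*η₂ + -(24*ω₁*η₁*η₂+8*ω₂*η₁*η₂) * Real.log x
            + (32*ω₁*ω₂*η₁*η₂) * Real.log x ^ 2))))) := by
    apply intervalIntegral.integral_congr_ae
    filter_upwards with x hx
    rw [Set.uIoc_of_le (zero_le_one' ℝ)] at hx
    have hx0 : 0 < x := hx.1
    have p1 : x ^ (ω₁+ω₂-1) = x ^ (ω₁-1) * x ^ ω₂ := by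
      rw [← Real.rpow_add hx0]; congr 1; ring
    have p2 : x ^ (2*ω₁+ω₂-1) = x ^ (2*ω₁-1) * x ^ ω₂ := by
      rw [← Real.rpow_add hx0]; congr 1; ring
    have p3 : x ^ (ω₁+2*ω₂-1) = x ^ (ω₁-1) * x ^ (2*ω₂) := by
      rw [← Real.rpow_add hx0]; congr 1; ring
    have p4 : x ^ (2*ω₁+2*ω₂-1) = x ^ (2*ω₁-1) * x ^ (2*ω₂) := by
      rw [← Real.rpow_add hx0]; congr 1; ring
    rw [p1, p2, p3, p4]; ring
  rw [hcong, intervalIntegral.integral_const_mul,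
    intervalIntegral.integral_add i1 (i2.add (i3.add i4)),
    intervalIntegral.integral_add i2 (i3.add i4),
    intervalIntegral.integral_add i3 i4,
    ush_integral_poly _ _ _ _ h1, ush_integral_poly _ _ _ _ h2,
    ush_integral_poly _ _ _ _ h3, ush_integral_poly _ _ _ _ h4]
  have e1 : ω₁+ω₂-1+1 = ω₁+ω₂ := by ring
  have e2 : 2*ω₁+ω₂-1+1 = 2*ω₁+ω₂ := by ring
  have e3 : ω₁+2*ω₂-1+1 = ω₁+2*ω₂ := by ring
  have e4 : 2*ω₁+2*ω₂-1+1 = 2*ω₁+2*ω₂ := by ring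
  rw [e1, e2, e3, e4]
  have n1 : ω₁+ω₂ ≠ 0 := by positivity
  have n2 : 2*ω₁+ω₂ ≠ 0 := by positivity
  have n3 : ω₁+2*ω₂ ≠ 0 := by positivity
  have n4 : 2*ω₁+2*ω₂ ≠ 0 := by positivity
  have n5 : ω₁+3*η₁ ≠ 0 := by positivity
  have n6 : ω₂+3*η₂ ≠ 0 := by positivity
  field_simp
  ring
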